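/- An example with unique non-integral subgradient: let D = {(0,0,0), ±(1,1,0), ±(0,1,1), ±(1,0,1)} ⊆ ℤ³ and define f: ℤ³ → ℤ ∪ {+∞} by f(x) = (x₁+x₂+x₃)/2 for x ∈ D and +∞ otherwise (note the value is an integer on D). Then the subdifferential ∂f(0,0,0) = {p ∈ ℝ³ : f(y) ≥ ⟨p,y⟩ for all y ∈ ℤ³} equals the single point {(1/2, 1/2, 1/2)}; in particular ∂f(0,0,0) ∩ ℤ³ = ∅. -/

import Mathlib

/-- **A unique non-integral subgradient.**  Let
D = {(0,0,0), ±(1,1,0), ±(0,1,1), ±(1,0,1)} ⊆ ℤ³ and define f by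
f(x) = (x₁+x₂+x₃)/2 on D and +∞ elsewhere.  Then
∂f(0,0,0) = {p ∈ ℝ³ : f(y) ≥ ⟨p,y⟩ for all y ∈ ℤ³} = {(1/2,1/2,1/2)};
in particular ∂f(0,0,0) contains no integer vector. -/
theorem unique_nonintegral_subgradient (D : Set (Fin 3 → ℤ))
    (hD : D = {![0,0,0], ![1,1,0], ![-1,-1,0], ![0,1,1], ![0,-1,-1],
               ![1,0,1], ![-1,0,-1]})
    (f : (Fin 3 → ℤ) → EReal)
    (hfD : ∀ x ∈ D, f x = ((((x 0 + x 1 + x 2 : ℤ) : ℝ) / 2 : ℝ) : EReal))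
    (hfD' : ∀ x ∉ D, f x = (⊤ : EReal)) :
    {p : Fin 3 → ℝ | ∀ y : Fin 3 → ℤ,
        (((∑ i, p i * (y i : ℝ)) : ℝ) : EReal) ≤ f y} =
      {fun _ => (1 / 2 : ℝ)} ∧
    ¬ ∃ q : Fin 3 → ℤ, ∀ y : Fin 3 → ℤ,
        (((∑ i, (q i : ℝ) * (y i : ℝ)) : ℝ) : EReal) ≤ f y := by
  have hmain : {p : Fin 3 → ℝ | ∀ y : Fin 3 → ℤ,
        (((∑ i, p i * (y i : ℝ)) : ℝ) : EReal) ≤ f y} =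
      {fun _ => (1 / 2 : ℝ)} := by
    ext p
    simp only [Set.mem_setOf_eq, Set.mem_singleton_iff]
    constructor
    · intro hp
      have h1 := hp ![1,1,0]
      have h2 := hp ![-1,-1,0]
      have h3 := hp ![0,1,1]
      have h4 := hp ![0,-1,-1]
      have h5 := hp ![1,0,1]
      have h6 := hp ![-1,0,-1]
      rw [hfD ![1,1,0] (by rw [hD]; simp)] at h1
      rw [hfD ![-1,-1,0] (by rw [hD]; simp)] at h2
      rw [hfD ![0,1,1] (by rw [hD]; simp)] at h3
      rw [hfD ![0,-1,-1] (by rw [hD]; simp)] at h4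
      rw [hfD ![1,0,1] (by rw [hD]; simp)] at h5
      rw [hfD ![-1,0,-1] (by rw [hD]; simp)] at h6
      rw [EReal.coe_le_coe_iff] at h1 h2 h3 h4 h5 h6
      simp only [Fin.sum_univ_three] at h1 h2 h3 h4 h5 h6
      norm_num [Matrix.cons_val_two, Matrix.tail_cons, Matrix.head_cons] at h1 h2 h3 h4 h5 h6
      funext i
      fin_cases i <;> simp <;> linarith
    · rintro rfl
      intro y
      by_cases hy : y ∈ D
      · have := hfD y hy
        rw [this]
        rw [hD] at hy
        simp only [Set.mem_insert_iff, Set.mem_singleton_iff] at hy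
        rcases hy with rfl|rfl|rfl|rfl|rfl|rfl|rfl <;>
          rw [EReal.coe_le_coe_iff] <;> norm_num [Fin.sum_univ_three, Matrix.cons_val_two, Matrix.tail_cons, Matrix.head_cons]
      · rw [hfD' y hy]
        exact le_top
  refine ⟨hmain, ?_⟩
  rintro ⟨q, hq⟩
  have hmem : (fun i => (q i : ℝ)) ∈ {p : Fin 3 → ℝ | ∀ y : Fin 3 → ℤ,
        (((∑ i, p i * (y i : ℝ)) : ℝ) : EReal) ≤ f y} := hq
  rw [hmain] at hmem
  have h0 : (q 0 : ℝ) = 1 / 2 := congrFun hmem 0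
  have : (2 : ℝ) * (q 0 : ℝ) = 1 := by rw [h0]; ring
  have : (2 * q 0 : ℤ) = (1 : ℤ) := by exact_mod_cast this
  omega
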